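/- Let d : ℝ → ℝ satisfy the Leibniz rule d(xy) = x·d(y) + y·d(x) for all x, y ∈ ℝ. Let Ω ⊆ ℝ be a nonempty open set and let f, g : Ω → ℝ be differentiable functions that are positive on Ω, and assume d is a derivation with respect to f and a derivation with respect to g. Then, for all rational numbers r, s ∈ ℚ, d is a derivation with respect to the function x ↦ f(x)^r · g(x)^s on Ω. -/

import Mathlib

lemma my_d_one (d : ℝ → ℝ) (hleib : ∀ x y : ℝ, d (x * y) = x * d y + y * d x) :
    d 1 = 0 := by
  have h := hleib 1 1
  simp at h
  linarith

lemma my_d_pow_succ (d : ℝ → ℝ) (hleib : ∀ x y : ℝ, d (x * y) = x * d y + y * d x)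
    (a : ℝ) : ∀ n : ℕ, d (a ^ (n + 1)) = (n + 1) * a ^ n * d a := by
  intro n
  induction n with
  | zero => simp
  | succ n ih =>
    have h : a ^ (n + 1 + 1) = a * a ^ (n + 1) := by ring
    rw [h, hleib, ih]
    push_cast
    ring

lemma my_d_inv (d : ℝ → ℝ) (hleib : ∀ x y : ℝ, d (x * y) = x * d y + y * d x)
    (b : ℝ) (hb : b ≠ 0) : d b⁻¹ = -(d b) / b ^ 2 := by
  have h := hleib b b⁻¹
  rw [mul_inv_cancel₀ hb, my_d_one d hleib] at h
  field_simp at h ⊢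
  nlinarith [h, sq_nonneg b]

lemma my_d_zpow (d : ℝ → ℝ) (hleib : ∀ x y : ℝ, d (x * y) = x * d y + y * d x)
    (a : ℝ) (ha : a ≠ 0) (m : ℤ) :
    d (a ^ m) = m * a ^ (m - 1) * d a := by
  rcases m with n | n
  · cases n with
    | zero => simpa using my_d_one d hleib
    | succ n =>
      have h1 : (Int.ofNat (n + 1)) = ((n : ℤ) + 1) := rfl
      rw [h1]
      rw [show a ^ ((n : ℤ) + 1) = a ^ (n + 1 : ℕ) by rw [← zpow_natCast]; push_cast; ring_nf]
      rw [my_d_pow_succ d hleib a n]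
      rw [show ((n : ℤ) + 1 - 1) = (n : ℤ) by ring, zpow_natCast]
      push_cast; ring
  · rw [zpow_negSucc, my_d_inv d hleib _ (pow_ne_zero _ ha), my_d_pow_succ d hleib a n]
    have h2 : a ^ (Int.negSucc n - 1) = (a ^ (n + 2 : ℕ))⁻¹ := by
      rw [show (Int.negSucc n - 1) = -((n + 2 : ℕ) : ℤ) by simp [Int.negSucc_eq]; ring,
        zpow_neg, zpow_natCast]
    rw [h2]
    have hpow : a ^ (n + 2 : ℕ) ≠ 0 := pow_ne_zero _ ha
    field_simp
    push_cast
    ring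

lemma my_d_rpow (d : ℝ → ℝ) (hleib : ∀ x y : ℝ, d (x * y) = x * d y + y * d x)
    (a : ℝ) (ha : 0 < a) (r : ℚ) :
    d (a ^ (r : ℝ)) = r * a ^ ((r : ℝ) - 1) * d a := by
  set b := a ^ (r : ℝ) with hb
  have hbpos : 0 < b := Real.rpow_pos_of_pos ha _
  obtain ⟨n, hn⟩ : ∃ n, r.den = n + 1 := ⟨r.den - 1, (Nat.succ_pred_eq_of_pos r.pos).symm⟩
  have hrden : (r : ℝ) * r.den = r.num := by
    have hcast : (r : ℝ) = (r.num : ℝ) / (r.den : ℝ) := by rw [Rat.cast_def]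
    have hdnz : (r.den : ℝ) ≠ 0 := Nat.cast_ne_zero.2 r.den_nz
    rw [hcast]; field_simp
  have hkey : b ^ (r.den : ℕ) = a ^ r.num := by
    rw [hb, ← Real.rpow_natCast (a ^ (r : ℝ)) r.den, ← Real.rpow_mul ha.le,
      ← Real.rpow_intCast a r.num]
    rw [show (r : ℝ) * (r.den : ℝ) = ((r.num : ℤ) : ℝ) by exact_mod_cast hrden]
  have hd := congrArg d hkey
  rw [hn, my_d_pow_succ d hleib b n, my_d_zpow d hleib a ha.ne' r.num] at hd
  -- express RHS coefficient in rpow terms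
  have hc : (r.num : ℝ) = (r : ℝ) * ((n : ℝ) + 1) := by rw [← hrden, hn]; push_cast; ring
  have hmul : a ^ ((r : ℝ) - 1) * a ^ ((r : ℝ) * (n : ℝ)) = a ^ ((r.num : ℝ) - 1) := by
    rw [← Real.rpow_add ha]
    congr 1
    rw [hc]; ring
  have h2 : (r.num : ℝ) * a ^ (r.num - 1) = (r : ℝ) * a ^ ((r : ℝ) - 1) * (((n : ℝ) + 1) * b ^ n) := by
    rw [hb, ← Real.rpow_natCast (a ^ (r : ℝ)) n, ← Real.rpow_mul ha.le,
      ← Real.rpow_intCast a (r.num - 1),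
      show (((r.num - 1 : ℤ)) : ℝ) = (r.num : ℝ) - 1 by push_cast; ring,
      ← hmul, hc]
    ring
  have hnz : ((n : ℝ) + 1) * b ^ n ≠ 0 := by positivity
  have h3 : d b * (((n : ℝ) + 1) * b ^ n) =
      ((r : ℝ) * a ^ ((r : ℝ) - 1) * d a) * (((n : ℝ) + 1) * b ^ n) := by
    linear_combination hd + d a * h2
  exact mul_right_cancel₀ hnz h3

/-- If `d : ℝ → ℝ` satisfies the Leibniz rule and is a derivation with respect to the
positive differentiable functions `f` and `g` on the nonempty open set `Ω`, then for all
rationals `r, s`, `d` is a derivation with respect to `x ↦ f x ^ r * g x ^ s`. -/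
theorem derivation_wrt_rpow_product
    (d : ℝ → ℝ) (hleib : ∀ x y : ℝ, d (x * y) = x * d y + y * d x)
    (Ω : Set ℝ) (hΩ : IsOpen Ω) (hne : Ω.Nonempty)
    (f g : ℝ → ℝ)
    (hf : ∀ x ∈ Ω, DifferentiableAt ℝ f x)
    (hg : ∀ x ∈ Ω, DifferentiableAt ℝ g x)
    (hfpos : ∀ x ∈ Ω, 0 < f x)
    (hgpos : ∀ x ∈ Ω, 0 < g x)
    (hdf : ∀ x ∈ Ω, d (f x) = deriv f x * d x)
    (hdg : ∀ x ∈ Ω, d (g x) = deriv g x * d x) :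
    ∀ (r s : ℚ), ∀ x ∈ Ω,
      d (f x ^ (r : ℝ) * g x ^ (s : ℝ)) =
        deriv (fun y => f y ^ (r : ℝ) * g y ^ (s : ℝ)) x * d x := by
  intro r s x hx
  have hfx := hfpos x hx
  have hgx := hgpos x hx
  have hF : HasDerivAt (fun y => f y ^ (r : ℝ)) (deriv f x * (r : ℝ) * f x ^ ((r : ℝ) - 1)) x :=
    ((hf x hx).hasDerivAt).rpow_const (Or.inl hfx.ne')
  have hG : HasDerivAt (fun y => g y ^ (s : ℝ)) (deriv g x * (s : ℝ) * g x ^ ((s : ℝ) - 1)) x :=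
    ((hg x hx).hasDerivAt).rpow_const (Or.inl hgx.ne')
  have hprod := hF.mul hG
  rw [show (fun y => f y ^ (r : ℝ) * g y ^ (s : ℝ)) = ((fun y => f y ^ (r : ℝ)) * fun y => g y ^ (s : ℝ)) from rfl, hprod.deriv]
  rw [hleib, my_d_rpow d hleib _ hfx r, my_d_rpow d hleib _ hgx s, hdf x hx, hdg x hx]
  ring
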